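/- Let W_i = T_{a_i} ∘ ... ∘ T_{a_0} with a_i ∈ (0,1) and let s_i > 0 satisfy s_{i+1} = s_i(1-a_{i+1})a_{i+2}. Then the function F(x) = Σ_{i=0}^∞ s_i W_i(x) on [0,1] is concave (equivalently, C - F is convex for the appropriate sign convention); i.e., the piecewise-linear partial sums f_n = Σ_{i=0}^{n-1} s_i W_i have derivative sequences that are monotone decreasing across the ordered breakpoints. -/

import Mathlib

noncomputable def T (a : ℝ) (x : ℝ) : ℝ :=
  if x ≤ a then x / a else 1 - (x - a) / (1 - a)

noncomputable def W (a : ℕ → ℝ) : ℕ → ℝ → ℝ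
  | 0 => T (a 0)
  | n + 1 => fun x => T (a (n + 1)) (W a n x)

open Set Finset

/-! ### Auxiliary lemmas -/

lemma T_left {a x : ℝ} (hx : x ≤ a) : T a x = x / a := if_pos hx

lemma T_right {a x : ℝ} (ha : a ∈ Set.Ioo (0:ℝ) 1) (hx : a ≤ x) :
    T a x = (1 - x) / (1 - a) := by
  obtain ⟨ha0, ha1⟩ := ha
  have h1a : (1:ℝ) - a ≠ 0 := by linarith
  unfold T
  split_ifs with h
  · have hxa : x = a := le_antisymm h hx
    subst hxa
    rw [div_self (ne_of_gt ha0)]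
    field_simp
  · field_simp
    try ring

lemma T_mem {a : ℝ} (ha : a ∈ Set.Ioo (0:ℝ) 1) {x : ℝ} (hx : x ∈ Set.Icc (0:ℝ) 1) :
    T a x ∈ Set.Icc (0:ℝ) 1 := by
  obtain ⟨ha0, ha1⟩ := ha
  obtain ⟨hx0, hx1⟩ := hx
  unfold T
  split_ifs with h
  · constructor
    · positivity
    · rw [div_le_one ha0]; exact h
  · push_neg at h
    constructor
    · have : (x - a) / (1 - a) ≤ 1 := by
        rw [div_le_one (by linarith)]; linarith
      linarith
    · have : 0 ≤ (x - a) / (1 - a) := by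
        apply div_nonneg <;> linarith
      linarith

lemma W_mem {a : ℕ → ℝ} (ha : ∀ i, a i ∈ Set.Ioo (0:ℝ) 1) :
    ∀ (n : ℕ) {x : ℝ}, x ∈ Set.Icc (0:ℝ) 1 → W a n x ∈ Set.Icc (0:ℝ) 1
  | 0, x, hx => T_mem (ha 0) hx
  | n + 1, x, hx => T_mem (ha (n+1)) (W_mem ha n hx)

lemma T_zero {a : ℝ} (ha : 0 < a) : T a 0 = 0 := by
  rw [T_left ha.le, zero_div]

lemma T_one {a : ℝ} (ha : a ∈ Set.Ioo (0:ℝ) 1) : T a 1 = 0 := by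
  rw [T_right ha ha.2.le, sub_self, zero_div]

lemma W_zero {a : ℕ → ℝ} (ha : ∀ i, a i ∈ Set.Ioo (0:ℝ) 1) :
    ∀ n, W a n 0 = 0
  | 0 => T_zero (ha 0).1
  | n + 1 => by
      show T (a (n+1)) (W a n 0) = 0
      rw [W_zero ha n, T_zero (ha (n+1)).1]

lemma W_one {a : ℕ → ℝ} (ha : ∀ i, a i ∈ Set.Ioo (0:ℝ) 1) :
    ∀ n, W a n 1 = 0
  | 0 => T_one (ha 0)
  | n + 1 => by
      show T (a (n+1)) (W a n 1) = 0
      rw [W_one ha n, T_zero (ha (n+1)).1]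

lemma W_shift (a : ℕ → ℝ) : ∀ (n : ℕ) (x : ℝ),
    W a (n + 1) x = W (fun i => a (i + 1)) n (T (a 0) x)
  | 0, x => rfl
  | n + 1, x => by
      show T (a (n+2)) (W a (n+1) x) = T (a (n+2)) (W (fun i => a (i+1)) n (T (a 0) x))
      rw [W_shift a n x]

/-- Partial sums of the series. -/
noncomputable def fpart (a s : ℕ → ℝ) (n : ℕ) (x : ℝ) : ℝ :=
  ∑ i ∈ Finset.range n, s i * W a i x

lemma fpart_succ (a s : ℕ → ℝ) (n : ℕ) (x : ℝ) :
    fpart a s (n + 1) x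
      = s 0 * T (a 0) x
        + fpart (fun i => a (i + 1)) (fun i => s (i + 1)) n (T (a 0) x) := by
  unfold fpart
  rw [Finset.sum_range_succ']
  have h0 : s 0 * W a 0 x = s 0 * T (a 0) x := rfl
  rw [h0, add_comm]
  congr 1
  refine Finset.sum_congr rfl fun i _ => ?_
  rw [W_shift a i x]

lemma fpart_nonneg {a s : ℕ → ℝ} (ha : ∀ i, a i ∈ Set.Ioo (0:ℝ) 1)
    (hs : ∀ i, 0 < s i) (n : ℕ) {x : ℝ} (hx : x ∈ Set.Icc (0:ℝ) 1) :
    0 ≤ fpart a s n x := by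
  apply Finset.sum_nonneg
  intro i _
  exact mul_nonneg (hs i).le (W_mem ha i hx).1

lemma fpart_one {a s : ℕ → ℝ} (ha : ∀ i, a i ∈ Set.Ioo (0:ℝ) 1) (n : ℕ) :
    fpart a s n 1 = 0 := by
  unfold fpart
  refine Finset.sum_eq_zero fun i _ => ?_
  rw [W_one ha i, mul_zero]

lemma fpart_zero_pt {a s : ℕ → ℝ} (ha : ∀ i, a i ∈ Set.Ioo (0:ℝ) 1) (n : ℕ) :
    fpart a s n 0 = 0 := by
  unfold fpart
  refine Finset.sum_eq_zero fun i _ => ?_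
  rw [W_zero ha i, mul_zero]

lemma concaveOn_congr' {s : Set ℝ} {f g : ℝ → ℝ} (hf : ConcaveOn ℝ s f)
    (h : ∀ x ∈ s, f x = g x) : ConcaveOn ℝ s g := by
  refine ⟨hf.1, fun x hx y hy μ ν hμ hν hμν => ?_⟩
  rw [← h x hx, ← h y hy, ← h _ (hf.1 hx hy hμ hν hμν)]
  exact hf.2 hx hy hμ hν hμν

/-- Gluing two concave pieces along a common point where the secant slopes are ordered. -/
lemma concave_glue {f : ℝ → ℝ} {c m d : ℝ} (hcm : c ≤ m) (hmd : m ≤ d)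
    (h1 : ConcaveOn ℝ (Set.Icc c m) f) (h2 : ConcaveOn ℝ (Set.Icc m d) f)
    (hsl : ∀ u, c ≤ u → u < m → ∀ v, m < v → v ≤ d →
      (f v - f m) / (v - m) ≤ (f m - f u) / (m - u)) :
    ConcaveOn ℝ (Set.Icc c d) f := by
  apply concaveOn_of_slope_anti_adjacent (convex_Icc c d)
  intro x y z hx hz hxy hyz
  rcases le_or_gt z m with hzm | hmz
  · exact h1.slope_anti_adjacent ⟨hx.1, ((hxy.trans hyz).le.trans hzm)⟩ ⟨hx.1.trans (hxy.trans hyz).le, hzm⟩ hxy hyz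
  rcases le_or_gt m x with hmx | hxm
  · exact h2.slope_anti_adjacent ⟨hmx, hx.2⟩ ⟨hmx.trans (hxy.trans hyz).le, hz.2⟩ hxy hyz
  -- now x < m < z
  rcases lt_trichotomy y m with hym | hym | hym
  · -- x < y < m < z
    have A := h1.slope_anti_adjacent (x := x) (y := y) (z := m)
      ⟨hx.1, hxm.le⟩ ⟨hcm, le_rfl⟩ hxy hym
    have B := hsl y (hx.1.trans hxy.le) hym z hmz hz.2
    have hmy : (0:ℝ) < m - y := by linarith
    have hzm' : (0:ℝ) < z - m := by linarith
    have hzy : (0:ℝ) < z - y := by linarith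
    rw [div_le_div_iff₀ hzm' hmy] at B
    have C : (f z - f y) / (z - y) ≤ (f m - f y) / (m - y) := by
      rw [div_le_div_iff₀ hzy hmy]
      nlinarith [B]
    linarith [C, A]
  · subst hym
    exact hsl x hx.1 hxm z hmz hz.2
  · -- x < m < y < z
    have A := h2.slope_anti_adjacent (x := m) (y := y) (z := z)
      ⟨le_rfl, hmd⟩ ⟨(hym.trans hyz).le, hz.2⟩ hym hyz
    have B := hsl x hx.1 hxm y hym (hyz.le.trans hz.2)
    have hxm' : (0:ℝ) < m - x := by linarith
    have hym' : (0:ℝ) < y - m := by linarith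
    have hyx : (0:ℝ) < y - x := by linarith
    rw [div_le_div_iff₀ hym' hxm'] at B
    have C : (f y - f m) / (y - m) ≤ (f y - f x) / (y - x) := by
      rw [div_le_div_iff₀ hym' hyx]
      nlinarith [B]
    linarith [A, C]

set_option maxHeartbeats 1600000 in
/-- The main inductive lemma: each partial sum is concave and satisfies sharp
linear bounds at both endpoints. -/
lemma fpart_main : ∀ (n : ℕ) (a s : ℕ → ℝ),
    (∀ i, a i ∈ Set.Ioo (0:ℝ) 1) → (∀ i, 0 < s i) →
    (∀ i, s (i + 1) = s i * (1 - a (i + 1)) * a (i + 2)) →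
    ConcaveOn ℝ (Set.Icc (0:ℝ) 1) (fpart a s n) ∧
    (∀ x ∈ Set.Icc (0:ℝ) 1, fpart a s n x ≤ s 0 / (a 0 * a 1) * x) ∧
    (∀ x ∈ Set.Icc (0:ℝ) 1, fpart a s n x ≤ s 0 / ((1 - a 0) * a 1) * (1 - x)) := by
  intro n
  induction n with
  | zero =>
      intro a s ha hs hrec
      refine ⟨concaveOn_congr' (concaveOn_const 0 (convex_Icc 0 1)) (fun x _ => by simp [fpart]), ?_, ?_⟩
      · intro x hx
        have : fpart a s 0 x = 0 := by simp [fpart]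
        rw [this]
        have h1 : 0 < a 0 * a 1 := mul_pos (ha 0).1 (ha 1).1
        exact mul_nonneg (div_nonneg (hs 0).le h1.le) hx.1
      · intro x hx
        have : fpart a s 0 x = 0 := by simp [fpart]
        rw [this]
        have h1 : 0 < (1 - a 0) * a 1 := mul_pos (by linarith [(ha 0).2]) (ha 1).1
        have h2 : 0 ≤ 1 - x := by linarith [hx.2]
        exact mul_nonneg (div_nonneg (hs 0).le h1.le) h2
  | succ n ih =>
      intro a s ha hs hrec
      set a' : ℕ → ℝ := fun i => a (i + 1) with ha'def
      set s' : ℕ → ℝ := fun i => s (i + 1) with hs'def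
      have ha' : ∀ i, a' i ∈ Set.Ioo (0:ℝ) 1 := fun i => ha (i + 1)
      have hs' : ∀ i, 0 < s' i := fun i => hs (i + 1)
      have hrec' : ∀ i, s' (i + 1) = s' i * (1 - a' (i + 1)) * a' (i + 2) := fun i => hrec (i + 1)
      obtain ⟨hGconc, hGL0, hGR0⟩ := ih a' s' ha' hs' hrec'
      set G : ℝ → ℝ := fpart a' s' n with hGdef
      have ha00 : 0 < a 0 := (ha 0).1
      have ha01 : a 0 < 1 := (ha 0).2
      have ha10 : 0 < a 1 := (ha 1).1
      have ha11 : a 1 < 1 := (ha 1).2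
      have ha20 : 0 < a 2 := (ha 2).1
      have ha21 : a 2 < 1 := (ha 2).2
      have hs0 : 0 < s 0 := hs 0
      have hrec0 : s 1 = s 0 * (1 - a 1) * a 2 := hrec 0
      have hne0 : a 0 ≠ 0 := ne_of_gt ha00
      have hne1 : a 1 ≠ 0 := ne_of_gt ha10
      have hne2 : a 2 ≠ 0 := ne_of_gt ha20
      have hne1a0 : (1:ℝ) - a 0 ≠ 0 := by linarith
      have hne1a1 : (1:ℝ) - a 1 ≠ 0 := by linarith
      -- translated bounds for G
      have hGL : ∀ y ∈ Set.Icc (0:ℝ) 1, G y ≤ s 0 * (1 - a 1) / a 1 * y := by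
        intro y hy
        have h := hGL0 y hy
        have heq : s' 0 / (a' 0 * a' 1) = s 0 * (1 - a 1) / a 1 := by
          show s 1 / (a 1 * a 2) = s 0 * (1 - a 1) / a 1
          rw [hrec0]
          field_simp
        rwa [heq] at h
      have hGR : ∀ y ∈ Set.Icc (0:ℝ) 1, G y ≤ s 0 * (1 - y) := by
        intro y hy
        have h := hGR0 y hy
        have heq : s' 0 / ((1 - a' 0) * a' 1) = s 0 := by
          show s 1 / ((1 - a 1) * a 2) = s 0
          rw [hrec0]
          field_simp
        rw [heq] at h
        linarith [h]
      have hG1 : G 1 = 0 := fpart_one ha' n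
      have hGnn : ∀ y ∈ Set.Icc (0:ℝ) 1, 0 ≤ G y := fun y hy => fpart_nonneg ha' hs' n hy
      -- formula for the new partial sum
      have hg : ∀ x, fpart a s (n + 1) x = s 0 * T (a 0) x + G (T (a 0) x) :=
        fun x => fpart_succ a s n x
      set g : ℝ → ℝ := fpart a s (n + 1) with hgdef
      -- T on the two pieces
      have hTl : ∀ x : ℝ, x ≤ a 0 → T (a 0) x = x / a 0 := fun x hx => T_left hx
      have hTr : ∀ x : ℝ, a 0 ≤ x → T (a 0) x = (1 - x) / (1 - a 0) :=
        fun x hx => T_right (ha 0) hx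
      have hmemL : ∀ x : ℝ, 0 ≤ x → x ≤ a 0 → x / a 0 ∈ Set.Icc (0:ℝ) 1 := by
        intro x h0 h1
        exact ⟨by positivity, by rw [div_le_one ha00]; exact h1⟩
      have hmemR : ∀ x : ℝ, a 0 ≤ x → x ≤ 1 → (1 - x) / (1 - a 0) ∈ Set.Icc (0:ℝ) 1 := by
        intro x h0 h1
        constructor
        · apply div_nonneg <;> linarith
        · rw [div_le_one (by linarith)]; linarith
      -- concavity on the left piece
      have hleft : ConcaveOn ℝ (Set.Icc (0:ℝ) (a 0)) g := by
        refine ⟨convex_Icc _ _, fun x hx y hy μ ν hμ hν hμν => ?_⟩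
        have hz : μ • x + ν • y ∈ Set.Icc (0:ℝ) (a 0) :=
          (convex_Icc _ _) hx hy hμ hν hμν
        simp only [smul_eq_mul] at hz ⊢
        have hTx := hTl x hx.2
        have hTy := hTl y hy.2
        have hTz := hTl _ hz.2
        have hlin : T (a 0) (μ * x + ν * y) = μ * T (a 0) x + ν * T (a 0) y := by
          rw [hTx, hTy, hTz]; ring
        have hTxm := hmemL x hx.1 hx.2; rw [← hTx] at hTxm
        have hTym := hmemL y hy.1 hy.2; rw [← hTy] at hTym
        have hGc := hGconc.2 hTxm hTym hμ hν hμν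
        simp only [smul_eq_mul] at hGc
        rw [hg, hg, hg, hlin]
        calc μ * (s 0 * T (a 0) x + G (T (a 0) x)) + ν * (s 0 * T (a 0) y + G (T (a 0) y))
            = s 0 * (μ * T (a 0) x + ν * T (a 0) y)
              + (μ * G (T (a 0) x) + ν * G (T (a 0) y)) := by ring
          _ ≤ s 0 * (μ * T (a 0) x + ν * T (a 0) y)
              + G (μ * T (a 0) x + ν * T (a 0) y) := by linarith [hGc]
      -- concavity on the right piece
      have hright : ConcaveOn ℝ (Set.Icc (a 0) (1:ℝ)) g := by
        refine ⟨convex_Icc _ _, fun x hx y hy μ ν hμ hν hμν => ?_⟩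
        have hz : μ • x + ν • y ∈ Set.Icc (a 0) (1:ℝ) :=
          (convex_Icc _ _) hx hy hμ hν hμν
        simp only [smul_eq_mul] at hz ⊢
        have hTx := hTr x hx.1
        have hTy := hTr y hy.1
        have hTz := hTr _ hz.1
        have hlin : T (a 0) (μ * x + ν * y) = μ * T (a 0) x + ν * T (a 0) y := by
          have e1 : μ * (1 - x) + ν * (1 - y) = 1 - (μ * x + ν * y) := by
            linear_combination hμν
          rw [hTx, hTy, hTz, ← e1]
          ring
        have hTxm := hmemR x hx.1 hx.2; rw [← hTx] at hTxm
        have hTym := hmemR y hy.1 hy.2; rw [← hTy] at hTym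
        have hGc := hGconc.2 hTxm hTym hμ hν hμν
        simp only [smul_eq_mul] at hGc
        rw [hg, hg, hg, hlin]
        calc μ * (s 0 * T (a 0) x + G (T (a 0) x)) + ν * (s 0 * T (a 0) y + G (T (a 0) y))
            = s 0 * (μ * T (a 0) x + ν * T (a 0) y)
              + (μ * G (T (a 0) x) + ν * G (T (a 0) y)) := by ring
          _ ≤ s 0 * (μ * T (a 0) x + ν * T (a 0) y)
              + G (μ * T (a 0) x + ν * T (a 0) y) := by linarith [hGc]
      -- the value at the peak
      have hga0 : g (a 0) = s 0 := by
        rw [hg, hTl (a 0) le_rfl, div_self (ne_of_gt ha00)]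
        rw [hG1]; ring
      -- gluing slope condition
      have hglue : ∀ u, (0:ℝ) ≤ u → u < a 0 → ∀ v, a 0 < v → v ≤ 1 →
          (g v - g (a 0)) / (v - a 0) ≤ (g (a 0) - g u) / (a 0 - u) := by
        intro u hu0 hua v hav hv1
        have hLnonneg : 0 ≤ (g (a 0) - g u) / (a 0 - u) := by
          apply div_nonneg _ (by linarith)
          have hp := hmemL u hu0 hua.le
          have hgu : g u = s 0 * (u / a 0) + G (u / a 0) := by
            rw [hg, hTl u hua.le]
          have hb := hGR (u / a 0) hp
          rw [hga0, hgu]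
          nlinarith [hb]
        have hRnonpos : (g v - g (a 0)) / (v - a 0) ≤ 0 := by
          apply div_nonpos_of_nonpos_of_nonneg _ (by linarith)
          have hq := hmemR v hav.le hv1
          have hgv : g v = s 0 * ((1 - v) / (1 - a 0)) + G ((1 - v) / (1 - a 0)) := by
            rw [hg, hTr v hav.le]
          have hb := hGR ((1 - v) / (1 - a 0)) hq
          rw [hga0, hgv]
          nlinarith [hb]
        linarith
      have hconc : ConcaveOn ℝ (Set.Icc (0:ℝ) 1) g :=
        concave_glue ha00.le ha01.le hleft hright hglue
      refine ⟨hconc, ?_, ?_⟩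
      · -- left bound
        intro x hx
        rcases le_or_gt x (a 0) with hxa | hxa
        · have hp := hmemL x hx.1 hxa
          have hb := hGL (x / a 0) hp
          rw [hg, hTl x hxa]
          have heq : s 0 * (x / a 0) + s 0 * (1 - a 1) / a 1 * (x / a 0)
              = s 0 / (a 0 * a 1) * x := by field_simp; ring
          linarith [hb, heq]
        · have hq := hmemR x hxa.le hx.2
          have hb := hGL ((1 - x) / (1 - a 0)) hq
          rw [hg, hTr x hxa.le]
          have hq1 : (1 - x) / (1 - a 0) ≤ 1 := hq.2
          have hq0 : 0 ≤ (1 - x) / (1 - a 0) := hq.1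
          have hstep : s 0 * ((1 - x) / (1 - a 0)) + G ((1 - x) / (1 - a 0)) ≤ s 0 / a 1 := by
            have heq2 : s 0 * ((1 - x) / (1 - a 0)) + s 0 * (1 - a 1) / a 1 * ((1 - x) / (1 - a 0))
                = s 0 / a 1 * ((1 - x) / (1 - a 0)) := by field_simp; ring
            nlinarith [hb, heq2, mul_nonneg (div_nonneg hs0.le ha10.le)
              (by linarith : (0:ℝ) ≤ 1 - (1 - x) / (1 - a 0))]
          have hfin : s 0 / a 1 ≤ s 0 / (a 0 * a 1) * x := by
            have h1 : s 0 / (a 0 * a 1) * a 0 = s 0 / a 1 := by field_simp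
            calc s 0 / a 1 = s 0 / (a 0 * a 1) * a 0 := h1.symm
              _ ≤ s 0 / (a 0 * a 1) * x :=
                  mul_le_mul_of_nonneg_left hxa.le
                    (div_nonneg hs0.le (mul_pos ha00 ha10).le)
          linarith
      · -- right bound
        intro x hx
        rcases le_or_gt (a 0) x with hxa | hxa
        · have hq := hmemR x hxa hx.2
          have hb := hGL ((1 - x) / (1 - a 0)) hq
          rw [hg, hTr x hxa]
          have heq : s 0 * ((1 - x) / (1 - a 0)) + s 0 * (1 - a 1) / a 1 * ((1 - x) / (1 - a 0))
              = s 0 / ((1 - a 0) * a 1) * (1 - x) := by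
            field_simp
            ring
          linarith [hb, heq]
        · have hp := hmemL x hx.1 hxa.le
          have hb := hGL (x / a 0) hp
          rw [hg, hTl x hxa.le]
          have hp1 : x / a 0 ≤ 1 := hp.2
          have hp0 : 0 ≤ x / a 0 := hp.1
          have hstep : s 0 * (x / a 0) + G (x / a 0) ≤ s 0 / a 1 := by
            have heq2 : s 0 * (x / a 0) + s 0 * (1 - a 1) / a 1 * (x / a 0)
                = s 0 / a 1 * (x / a 0) := by field_simp; ring
            nlinarith [hb, heq2, mul_nonneg (div_nonneg hs0.le ha10.le)
              (by linarith : (0:ℝ) ≤ 1 - x / a 0)]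
          have hfin : s 0 / a 1 ≤ s 0 / ((1 - a 0) * a 1) * (1 - x) := by
            have h1 : (0:ℝ) < 1 - a 0 := by linarith
            have h2 : (1:ℝ) - a 0 ≤ 1 - x := by linarith
            have h3 : s 0 / ((1 - a 0) * a 1) * (1 - a 0) = s 0 / a 1 := by
              field_simp
            calc s 0 / a 1 = s 0 / ((1 - a 0) * a 1) * (1 - a 0) := h3.symm
              _ ≤ s 0 / ((1 - a 0) * a 1) * (1 - x) :=
                  mul_le_mul_of_nonneg_left h2
                    (div_nonneg hs0.le (mul_pos h1 ha10).le)
          linarith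

/-- Concavity inequality for partial sums (three points form). -/
lemma fpart_concave_ineq {a s : ℕ → ℝ} (ha : ∀ i, a i ∈ Set.Ioo (0:ℝ) 1)
    (hs : ∀ i, 0 < s i) (hrec : ∀ i, s (i + 1) = s i * (1 - a (i + 1)) * a (i + 2))
    (n : ℕ) {x y μ ν : ℝ} (hx : x ∈ Set.Icc (0:ℝ) 1) (hy : y ∈ Set.Icc (0:ℝ) 1)
    (hμ : 0 ≤ μ) (hν : 0 ≤ ν) (hμν : μ + ν = 1) :
    μ * fpart a s n x + ν * fpart a s n y ≤ fpart a s n (μ * x + ν * y) := by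
  have h := (fpart_main n a s ha hs hrec).1.2 hx hy hμ hν hμν
  simpa [smul_eq_mul] using h

/-- If the series is summable at one interior point, it is summable everywhere on `[0,1]`. -/
lemma summable_everywhere {a s : ℕ → ℝ} (ha : ∀ i, a i ∈ Set.Ioo (0:ℝ) 1)
    (hs : ∀ i, 0 < s i) (hrec : ∀ i, s (i + 1) = s i * (1 - a (i + 1)) * a (i + 2))
    {x₀ : ℝ} (hx₀ : x₀ ∈ Set.Ioo (0:ℝ) 1)
    (hsum : Summable (fun i => s i * W a i x₀)) :
    ∀ x ∈ Set.Icc (0:ℝ) 1, Summable (fun i => s i * W a i x) := by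
  intro x hx
  have hterm : ∀ i, 0 ≤ s i * W a i x := fun i => mul_nonneg (hs i).le (W_mem ha i hx).1
  have hterm0 : ∀ i, 0 ≤ s i * W a i x₀ :=
    fun i => mul_nonneg (hs i).le (W_mem ha i ⟨hx₀.1.le, hx₀.2.le⟩).1
  set C : ℝ := ∑' i, s i * W a i x₀ with hC
  have hpartC : ∀ n, fpart a s n x₀ ≤ C := by
    intro n
    exact Summable.sum_le_tsum (Finset.range n) (fun i _ => hterm0 i) hsum
  have hx₀m : x₀ ∈ Set.Icc (0:ℝ) 1 := ⟨hx₀.1.le, hx₀.2.le⟩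
  rcases le_or_gt x x₀ with hxx | hxx
  · -- x ≤ x₀ < 1 : x₀ is a convex combination of x and 1
    set t : ℝ := (1 - x₀) / (1 - x) with ht
    have hx1 : x < 1 := lt_of_le_of_lt hxx hx₀.2
    have h1x : (0:ℝ) < 1 - x := by linarith
    have ht0 : 0 < t := by apply div_pos <;> linarith [hx₀.2]
    have ht1 : t ≤ 1 := by rw [div_le_one h1x]; linarith
    have h1xne : (1:ℝ) - x ≠ 0 := ne_of_gt h1x
    have hcomb : t * x + (1 - t) * 1 = x₀ := by
      rw [ht]; field_simp; ring
    apply summable_of_sum_range_le hterm (c := C / t)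
    intro n
    have h := fpart_concave_ineq ha hs hrec n (μ := t) (ν := 1 - t) hx
      (⟨zero_le_one, le_rfl⟩ : (1:ℝ) ∈ Set.Icc (0:ℝ) 1) ht0.le (by linarith) (by ring)
    rw [hcomb] at h
    rw [fpart_one ha n] at h
    have h2 : t * fpart a s n x ≤ C := by
      have := hpartC n; linarith
    have : fpart a s n x ≤ C / t := by
      rw [le_div_iff₀ ht0]; linarith [h2]
    exact this
  · -- x₀ < x : x₀ is a convex combination of 0 and x
    set t : ℝ := x₀ / x with ht
    have hx0 : (0:ℝ) < x := lt_trans hx₀.1 hxx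
    have ht0 : 0 < t := div_pos hx₀.1 hx0
    have ht1 : t ≤ 1 := by rw [div_le_one hx0]; linarith
    have hxne : x ≠ 0 := ne_of_gt hx0
    have hcomb : t * x + (1 - t) * 0 = x₀ := by
      rw [ht]; field_simp; ring
    apply summable_of_sum_range_le hterm (c := C / t)
    intro n
    have h := fpart_concave_ineq ha hs hrec n (μ := t) (ν := 1 - t) hx
      (⟨le_rfl, zero_le_one⟩ : (0:ℝ) ∈ Set.Icc (0:ℝ) 1) ht0.le (by linarith) (by ring)
    rw [hcomb] at h
    rw [fpart_zero_pt ha n] at h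
    have h2 : t * fpart a s n x ≤ C := by
      have := hpartC n; linarith
    have : fpart a s n x ≤ C / t := by
      rw [le_div_iff₀ ht0]; linarith [h2]
    exact this

/-- With coefficients obeying the differentiability recurrence, the sum
`F x = ∑ s i * W i x` of scaled composed triangle waves is concave on `[0,1]`. -/
theorem composed_triangle_sum_concave (a : ℕ → ℝ) (s : ℕ → ℝ)
    (ha : ∀ i, a i ∈ Set.Ioo (0:ℝ) 1) (hs : ∀ i, 0 < s i)
    (hrec : ∀ i, s (i + 1) = s i * (1 - a (i + 1)) * a (i + 2)) :
    ConcaveOn ℝ (Set.Icc (0:ℝ) 1) (fun x => ∑' i : ℕ, s i * W a i x) := by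
  have hhalf : (1/2 : ℝ) ∈ Set.Ioo (0:ℝ) 1 := by norm_num
  by_cases hsum : Summable (fun i => s i * W a i (1/2 : ℝ))
  · -- summable case: the sum is a pointwise limit of the concave partial sums
    have hall := summable_everywhere ha hs hrec hhalf hsum
    refine ⟨convex_Icc _ _, fun x hx y hy μ ν hμ hν hμν => ?_⟩
    have hz : μ • x + ν • y ∈ Set.Icc (0:ℝ) 1 := (convex_Icc _ _) hx hy hμ hν hμν
    simp only [smul_eq_mul]
    have htx := (hall x hx).hasSum.tendsto_sum_nat
    have hty := (hall y hy).hasSum.tendsto_sum_nat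
    have htz := (hall _ hz).hasSum.tendsto_sum_nat
    simp only [smul_eq_mul] at hz htz
    refine le_of_tendsto_of_tendsto' ((htx.const_mul μ).add (hty.const_mul ν)) htz ?_
    intro n
    exact fpart_concave_ineq ha hs hrec n hx hy hμ hν hμν
  · -- non-summable case: the tsum vanishes identically on [0,1]
    have hzero : ∀ x ∈ Set.Icc (0:ℝ) 1, (∑' i, s i * W a i x) = 0 := by
      intro x hx
      rcases eq_or_lt_of_le hx.1 with h0 | h0
      · have : (fun i => s i * W a i x) = fun _ => 0 := by
          funext i; rw [← h0, W_zero ha i, mul_zero]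
        rw [this, tsum_zero]
      rcases eq_or_lt_of_le hx.2 with h1 | h1
      · have : (fun i => s i * W a i x) = fun _ => 0 := by
          funext i; rw [h1, W_one ha i, mul_zero]
        rw [this, tsum_zero]
      have hnot : ¬ Summable (fun i => s i * W a i x) := by
        intro hS
        exact hsum (summable_everywhere ha hs hrec ⟨h0, h1⟩ hS (1/2 : ℝ)
          ⟨by norm_num, by norm_num⟩)
      exact tsum_eq_zero_of_not_summable hnot
    exact concaveOn_congr' (concaveOn_const 0 (convex_Icc 0 1))
      (fun x hx => (hzero x hx).symm)
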